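/- arXiv:1101.0066 — 3 statements merged into one kernel-verified Lean document; each statement's English description precedes it below -/
import Mathlib

section
/- Let n ≥ 3 and let I be a finite set of diagonals of the convex (n+3)-gon G_{n+3} with 4·|I| > n(n+2). Then the non-crossing graph G(I) has at most two connected components. -/
/-- A diagonal of the convex `N`-gon with vertices labelled `1, …, N` in cyclic order:
a pair `(i, j)` with `1 ≤ i`, `i + 2 ≤ j ≤ N`, excluding the edge `(1, N)`. -/
def IsDiag (N : ℕ) (d : ℕ × ℕ) : Prop :=
  1 ≤ d.1 ∧ d.1 + 2 ≤ d.2 ∧ d.2 ≤ N ∧ ¬(d.1 = 1 ∧ d.2 = N)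

instance (N : ℕ) (d : ℕ × ℕ) : Decidable (IsDiag N d) := by
  unfold IsDiag; infer_instance

/-- Two diagonals of a convex polygon cross (intersect at an interior point). -/
def Crosses (d e : ℕ × ℕ) : Prop :=
  (d.1 < e.1 ∧ e.1 < d.2 ∧ d.2 < e.2) ∨ (e.1 < d.1 ∧ d.1 < e.2 ∧ e.2 < d.2)

instance (d e : ℕ × ℕ) : Decidable (Crosses d e) := by
  unfold Crosses; infer_instance

/-- The finite set of all diagonals of the convex `N`-gon. -/
def Diags (N : ℕ) : Finset (ℕ × ℕ) :=
  (Finset.range (N + 1) ×ˢ Finset.range (N + 1)).filter (IsDiag N)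
/-- The non-crossing graph `G(I)` on a finite set `I` of diagonals: two distinct
diagonals are adjacent iff they do not cross. Its connected components correspond to
the connected components of the union `P_I` of the facets of the associahedron `Asⁿ`
indexed by `I`. -/
def ncGraph (I : Finset (ℕ × ℕ)) : SimpleGraph {x // x ∈ I} where
  Adj d e := d ≠ e ∧ ¬ Crosses d.1 e.1
  symm := by
    constructor
    rintro d e ⟨h1, h2⟩
    exact ⟨h1.symm, fun h => h2 (Or.symm h)⟩
  loopless := ⟨fun d h => h.1 rfl⟩

/-- `G(I)` has exactly two connected components, `I₁` and `I₂`: they partition `I`,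
are nonempty, and two diagonals of `I` are joined by a path in the non-crossing graph
iff they lie in the same part. -/
def TwoComponents (I I₁ I₂ : Finset (ℕ × ℕ)) : Prop :=
  I₁ ∪ I₂ = I ∧ Disjoint I₁ I₂ ∧ I₁.Nonempty ∧ I₂.Nonempty ∧
    ∀ (d : ℕ × ℕ) (hd : d ∈ I) (e : ℕ × ℕ) (he : e ∈ I),
      (ncGraph I).Reachable ⟨d, hd⟩ ⟨e, he⟩ ↔
        (d ∈ I₁ ∧ e ∈ I₁) ∨ (d ∈ I₂ ∧ e ∈ I₂)

lemma quarterZ (a b c d e : ℤ) (ha : 0 ≤ a) (hb : 0 ≤ b) (hc : 0 ≤ c) (hd : 0 ≤ d)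
    (he : 0 ≤ e) : 4*(a*c + d*b + b*e) ≤ (a+b+c+d+e)^2 := by
  nlinarith [sq_nonneg (a-c), sq_nonneg (b-d-e), mul_nonneg (by linarith : (0:ℤ) ≤ a+c) (by linarith : (0:ℤ) ≤ b+d+e)]

lemma key' (F : Finset (ℕ × ℕ)) (i k j l : ℕ) (hik : i < k) (hkj : k < j) (hjl : j < l)
    (h : ∀ x ∈ F, ((x.1 < i ∧ i < x.2 ∧ x.2 < j) ∨ (i < x.1 ∧ x.1 < j ∧ j < x.2)) ∧
                  ((x.1 < k ∧ k < x.2 ∧ x.2 < l) ∨ (k < x.1 ∧ x.1 < l ∧ l < x.2))) :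
    4 * F.card ≤ (F.image Prod.fst ∪ F.image Prod.snd).card ^ 2 := by
  classical
  set V := F.image Prod.fst ∪ F.image Prod.snd with hV
  set S1 := V.filter (fun v => i < v ∧ v < k) with hS1
  set S2 := V.filter (fun v => k < v ∧ v < j) with hS2
  set S3 := V.filter (fun v => j < v ∧ v < l) with hS3
  set S4 := V.filter (fun v => v < i) with hS4
  set S5 := V.filter (fun v => l < v) with hS5
  have hmem1 : ∀ x ∈ F, x.1 ∈ V := fun x hx =>
    Finset.mem_union_left _ (Finset.mem_image_of_mem _ hx)
  have hmem2 : ∀ x ∈ F, x.2 ∈ V := fun x hx =>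
    Finset.mem_union_right _ (Finset.mem_image_of_mem _ hx)
  have hsub : F ⊆ (S1 ×ˢ S3) ∪ (S4 ×ˢ S2) ∪ (S2 ×ˢ S5) := by
    intro x hx
    obtain ⟨h1, h2⟩ := h x hx
    have hx1 := hmem1 x hx; have hx2 := hmem2 x hx
    simp only [Finset.mem_union, Finset.mem_product, hS1, hS2, hS3, hS4, hS5,
      Finset.mem_filter]
    rcases h1 with h1 | h1 <;> rcases h2 with h2 | h2
    · exact Or.inl (Or.inr ⟨⟨hx1, by omega⟩, ⟨hx2, by omega⟩⟩)
    · omega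
    · exact Or.inl (Or.inl ⟨⟨hx1, by omega⟩, ⟨hx2, by omega⟩⟩)
    · exact Or.inr ⟨⟨hx1, by omega⟩, ⟨hx2, by omega⟩⟩
  have hcard : F.card ≤ S1.card * S3.card + S4.card * S2.card + S2.card * S5.card := by
    calc F.card ≤ ((S1 ×ˢ S3) ∪ (S4 ×ˢ S2) ∪ (S2 ×ˢ S5)).card := Finset.card_le_card hsub
    _ ≤ ((S1 ×ˢ S3) ∪ (S4 ×ˢ S2)).card + (S2 ×ˢ S5).card := Finset.card_union_le _ _
    _ ≤ (S1 ×ˢ S3).card + (S4 ×ˢ S2).card + (S2 ×ˢ S5).card := by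
        have := Finset.card_union_le (S1 ×ˢ S3) (S4 ×ˢ S2); omega
    _ = S1.card * S3.card + S4.card * S2.card + S2.card * S5.card := by
        rw [Finset.card_product, Finset.card_product, Finset.card_product]
  have d12 : Disjoint S1 S2 := by
    rw [Finset.disjoint_left]; intro v h1 h2
    simp only [hS1, hS2, Finset.mem_filter] at h1 h2; omega
  have d123 : Disjoint (S1 ∪ S2) S3 := by
    rw [Finset.disjoint_left]; intro v h1 h2
    simp only [hS1, hS2, hS3, Finset.mem_union, Finset.mem_filter] at h1 h2; omega
  have d1234 : Disjoint (S1 ∪ S2 ∪ S3) S4 := by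
    rw [Finset.disjoint_left]; intro v h1 h2
    simp only [hS1, hS2, hS3, hS4, Finset.mem_union, Finset.mem_filter] at h1 h2; omega
  have d12345 : Disjoint (S1 ∪ S2 ∪ S3 ∪ S4) S5 := by
    rw [Finset.disjoint_left]; intro v h1 h2
    simp only [hS1, hS2, hS3, hS4, hS5, Finset.mem_union, Finset.mem_filter] at h1 h2; omega
  have hsub5 : S1 ∪ S2 ∪ S3 ∪ S4 ∪ S5 ⊆ V := by
    simp only [hS1, hS2, hS3, hS4, hS5]
    exact Finset.union_subset (Finset.union_subset (Finset.union_subset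
      (Finset.union_subset (Finset.filter_subset _ _) (Finset.filter_subset _ _))
      (Finset.filter_subset _ _)) (Finset.filter_subset _ _)) (Finset.filter_subset _ _)
  have hsum : S1.card + S2.card + S3.card + S4.card + S5.card ≤ V.card := by
    have h5 := Finset.card_le_card hsub5
    rw [Finset.card_union_of_disjoint d12345, Finset.card_union_of_disjoint d1234,
      Finset.card_union_of_disjoint d123, Finset.card_union_of_disjoint d12] at h5
    omega
  have hq : 4 * (S1.card * S3.card + S4.card * S2.card + S2.card * S5.card) ≤
      (S1.card + S2.card + S3.card + S4.card + S5.card) ^ 2 := by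
    zify
    have := quarterZ (S1.card : ℤ) S2.card S3.card S4.card S5.card
      (by positivity) (by positivity) (by positivity) (by positivity) (by positivity)
    linarith
  calc 4 * F.card ≤ 4 * (S1.card * S3.card + S4.card * S2.card + S2.card * S5.card) :=
        Nat.mul_le_mul_left 4 hcard
    _ ≤ (S1.card + S2.card + S3.card + S4.card + S5.card) ^ 2 := hq
    _ ≤ V.card ^ 2 := Nat.pow_le_pow_left hsum 2

lemma key (F : Finset (ℕ × ℕ)) (d e : ℕ × ℕ) (hde : Crosses d e)
    (h : ∀ x ∈ F, Crosses x d ∧ Crosses x e) :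
    4 * F.card ≤ (F.image Prod.fst ∪ F.image Prod.snd).card ^ 2 := by
  rcases hde with ⟨h1, h2, h3⟩ | ⟨h1, h2, h3⟩
  · exact key' F d.1 e.1 d.2 e.2 h1 h2 h3 (fun x hx => ⟨(h x hx).1, (h x hx).2⟩)
  · exact key' F e.1 d.1 e.2 d.2 h1 h2 h3 (fun x hx => ⟨(h x hx).2, (h x hx).1⟩)

/-- Lemma 2.20: if `I` is a set of diagonals of the `(n+3)`-gon with
`4·|I| > n(n+2)`, then the non-crossing graph `G(I)` has at most two connected
components (among any three diagonals of `I`, two are joined by a path). -/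
theorem at_most_two_components (n : ℕ) (hn : 3 ≤ n) (I : Finset (ℕ × ℕ))
    (hdiag : ∀ d ∈ I, IsDiag (n + 3) d) (hcard : 4 * I.card > n * (n + 2)) :
    ∀ a b c : {x // x ∈ I},
      (ncGraph I).Reachable a b ∨ (ncGraph I).Reachable a c ∨
        (ncGraph I).Reachable b c := by
  classical
  by_contra hcon
  push_neg at hcon
  obtain ⟨a, b, c, hab, hac, hbc⟩ := hcon
  set P : ℕ × ℕ → Prop := fun d => ∃ h : d ∈ I, (ncGraph I).Reachable a ⟨d, h⟩ with hP
  set Q : ℕ × ℕ → Prop := fun d => ∃ h : d ∈ I, (ncGraph I).Reachable b ⟨d, h⟩ with hQ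
  set A := I.filter P with hA
  set B := I.filter Q with hB
  set C := I.filter (fun d => ¬ P d ∧ ¬ Q d) with hC
  -- basic incompatibility
  have hPQ : ∀ d, P d → Q d → False := by
    rintro d ⟨h1, r1⟩ ⟨h2, r2⟩
    exact hab (r1.trans r2.symm)
  -- memberships
  have haA : a.1 ∈ A := by
    refine Finset.mem_filter.mpr ⟨a.2, ⟨a.2, ?_⟩⟩
    exact SimpleGraph.Reachable.refl a
  have hbB : b.1 ∈ B := by
    refine Finset.mem_filter.mpr ⟨b.2, ⟨b.2, ?_⟩⟩
    exact SimpleGraph.Reachable.refl b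
  have hcC : c.1 ∈ C := by
    refine Finset.mem_filter.mpr ⟨c.2, ⟨?_, ?_⟩⟩
    · rintro ⟨h, r⟩; exact hac r
    · rintro ⟨h, r⟩; exact hbc r
  -- cross facts
  have hAB : ∀ x ∈ A, ∀ y ∈ B, Crosses x y := by
    intro x hx y hy
    obtain ⟨hxI, hxP⟩ := Finset.mem_filter.mp hx
    obtain ⟨hyI, hyQ⟩ := Finset.mem_filter.mp hy
    obtain ⟨hxI', rx⟩ := hxP
    obtain ⟨hyI', ry⟩ := hyQ
    by_contra hnc
    have hne : x ≠ y := by rintro rfl; exact hPQ x ⟨hxI', rx⟩ ⟨hyI', ry⟩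
    have hadj : (ncGraph I).Adj ⟨x, hxI'⟩ ⟨y, hyI'⟩ :=
      ⟨fun h => hne (congrArg Subtype.val h), hnc⟩
    exact hab (rx.trans (hadj.reachable.trans ry.symm))
  have hAC : ∀ x ∈ A, ∀ y ∈ C, Crosses x y := by
    intro x hx y hy
    obtain ⟨hxI, hxP⟩ := Finset.mem_filter.mp hx
    obtain ⟨hyI, hyn⟩ := Finset.mem_filter.mp hy
    obtain ⟨hxI', rx⟩ := hxP
    by_contra hnc
    have hne : x ≠ y := by rintro rfl; exact hyn.1 ⟨hxI', rx⟩
    have hadj : (ncGraph I).Adj ⟨x, hxI'⟩ ⟨y, hyI⟩ :=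
      ⟨fun h => hne (congrArg Subtype.val h), hnc⟩
    exact hyn.1 ⟨hyI, rx.trans hadj.reachable⟩
  have hBC : ∀ x ∈ B, ∀ y ∈ C, Crosses x y := by
    intro x hx y hy
    obtain ⟨hxI, hxQ⟩ := Finset.mem_filter.mp hx
    obtain ⟨hyI, hyn⟩ := Finset.mem_filter.mp hy
    obtain ⟨hxI', rx⟩ := hxQ
    by_contra hnc
    have hne : x ≠ y := by rintro rfl; exact hyn.2 ⟨hxI', rx⟩
    have hadj : (ncGraph I).Adj ⟨x, hxI'⟩ ⟨y, hyI⟩ :=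
      ⟨fun h => hne (congrArg Subtype.val h), hnc⟩
    exact hyn.2 ⟨hyI, rx.trans hadj.reachable⟩
  have hCsymm : ∀ u v : ℕ × ℕ, Crosses u v → Crosses v u := fun u v h => Or.symm h
  -- partition
  have hpart : A ∪ B ∪ C = I := by
    ext d
    simp only [hA, hB, hC, Finset.mem_union, Finset.mem_filter]
    tauto
  have hdAB : Disjoint A B := by
    rw [Finset.disjoint_left]
    intro d h1 h2
    exact hPQ d (Finset.mem_filter.mp h1).2 (Finset.mem_filter.mp h2).2
  have hdABC : Disjoint (A ∪ B) C := by
    rw [Finset.disjoint_left]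
    intro d h1 h2
    have h2' := (Finset.mem_filter.mp h2).2
    rcases Finset.mem_union.mp h1 with h | h
    · exact h2'.1 (Finset.mem_filter.mp h).2
    · exact h2'.2 (Finset.mem_filter.mp h).2
  have hIcard : I.card = A.card + B.card + C.card := by
    rw [← hpart, Finset.card_union_of_disjoint hdABC, Finset.card_union_of_disjoint hdAB]
  -- representatives cross
  have hCab : Crosses a.1 b.1 := hAB a.1 haA b.1 hbB
  have hCac : Crosses a.1 c.1 := hAC a.1 haA c.1 hcC
  have hCbc : Crosses b.1 c.1 := hBC b.1 hbB c.1 hcC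
  -- the three quadratic bounds
  set VA := A.image Prod.fst ∪ A.image Prod.snd with hVA
  set VB := B.image Prod.fst ∪ B.image Prod.snd with hVB
  set VC := C.image Prod.fst ∪ C.image Prod.snd with hVC
  have h4A : 4 * A.card ≤ VA.card ^ 2 :=
    key A b.1 c.1 hCbc (fun x hx => ⟨hAB x hx b.1 hbB, hAC x hx c.1 hcC⟩)
  have h4B : 4 * B.card ≤ VB.card ^ 2 :=
    key B a.1 c.1 hCac (fun x hx => ⟨hCsymm _ _ (hAB a.1 haA x hx), hBC x hx c.1 hcC⟩)
  have h4C : 4 * C.card ≤ VC.card ^ 2 :=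
    key C a.1 b.1 hCab (fun x hx => ⟨hCsymm _ _ (hAC a.1 haA x hx),
      hCsymm _ _ (hBC b.1 hbB x hx)⟩)
  -- vertex sets pairwise disjoint
  have hvd : ∀ (F G : Finset (ℕ × ℕ)), (∀ x ∈ F, ∀ y ∈ G, Crosses x y) →
      Disjoint (F.image Prod.fst ∪ F.image Prod.snd)
        (G.image Prod.fst ∪ G.image Prod.snd) := by
    intro F G hcr
    rw [Finset.disjoint_left]
    intro v hv hv'
    simp only [Finset.mem_union, Finset.mem_image] at hv hv'
    obtain ⟨x, hx, hxv⟩ : ∃ x ∈ F, x.1 = v ∨ x.2 = v := by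
      rcases hv with ⟨x, hx, h⟩ | ⟨x, hx, h⟩
      exacts [⟨x, hx, Or.inl h⟩, ⟨x, hx, Or.inr h⟩]
    obtain ⟨y, hy, hyv⟩ : ∃ y ∈ G, y.1 = v ∨ y.2 = v := by
      rcases hv' with ⟨y, hy, h⟩ | ⟨y, hy, h⟩
      exacts [⟨y, hy, Or.inl h⟩, ⟨y, hy, Or.inr h⟩]
    have := hcr x hx y hy
    unfold Crosses at this
    omega
  have hdVAB : Disjoint VA VB := hvd A B hAB
  have hdVAC : Disjoint VA VC := hvd A C hAC
  have hdVBC : Disjoint VB VC := hvd B C hBC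
  -- vertex sets live in Icc 1 (n+3)
  have hVsub : ∀ (F : Finset (ℕ × ℕ)), F ⊆ I →
      F.image Prod.fst ∪ F.image Prod.snd ⊆ Finset.Icc 1 (n + 3) := by
    intro F hFI v hv
    simp only [Finset.mem_union, Finset.mem_image] at hv
    rw [Finset.mem_Icc]
    rcases hv with ⟨x, hx, h⟩ | ⟨x, hx, h⟩ <;>
    · have := hdiag x (hFI hx)
      unfold IsDiag at this
      omega
  have hsumV : VA.card + VB.card + VC.card ≤ n + 3 := by
    have hsub : VA ∪ VB ∪ VC ⊆ Finset.Icc 1 (n + 3) := by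
      refine Finset.union_subset (Finset.union_subset ?_ ?_) ?_
      · exact hVsub A (Finset.filter_subset _ _)
      · exact hVsub B (Finset.filter_subset _ _)
      · exact hVsub C (Finset.filter_subset _ _)
    have h1 := Finset.card_le_card hsub
    rw [Finset.card_union_of_disjoint (Finset.disjoint_union_left.mpr ⟨hdVAC, hdVBC⟩),
      Finset.card_union_of_disjoint hdVAB, Nat.card_Icc] at h1
    omega
  -- each vertex set has at least two elements
  have h2V : ∀ (F : Finset (ℕ × ℕ)), F ⊆ I → ∀ x ∈ F,
      2 ≤ (F.image Prod.fst ∪ F.image Prod.snd).card := by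
    intro F hFI x hx
    have hd := hdiag x (hFI hx)
    unfold IsDiag at hd
    refine Finset.one_lt_card.mpr ⟨x.1, ?_, x.2, ?_, by omega⟩
    · exact Finset.mem_union_left _ (Finset.mem_image_of_mem _ hx)
    · exact Finset.mem_union_right _ (Finset.mem_image_of_mem _ hx)
  have h2A : 2 ≤ VA.card := h2V A (Finset.filter_subset _ _) a.1 haA
  have h2B : 2 ≤ VB.card := h2V B (Finset.filter_subset _ _) b.1 hbB
  have h2C : 2 ≤ VC.card := h2V C (Finset.filter_subset _ _) c.1 hcC
  -- final arithmetic contradiction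
  have h4A' : (4 : ℤ) * A.card ≤ (VA.card : ℤ) ^ 2 := by exact_mod_cast h4A
  have h4B' : (4 : ℤ) * B.card ≤ (VB.card : ℤ) ^ 2 := by exact_mod_cast h4B
  have h4C' : (4 : ℤ) * C.card ≤ (VC.card : ℤ) ^ 2 := by exact_mod_cast h4C
  have hsumV' : (VA.card : ℤ) + VB.card + VC.card ≤ (n : ℤ) + 3 := by exact_mod_cast hsumV
  have h2A' : (2 : ℤ) ≤ VA.card := by exact_mod_cast h2A
  have h2B' : (2 : ℤ) ≤ VB.card := by exact_mod_cast h2B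
  have h2C' : (2 : ℤ) ≤ VC.card := by exact_mod_cast h2C
  have hn' : (3 : ℤ) ≤ n := by exact_mod_cast hn
  have hcard' : (n : ℤ) * (n + 2) < 4 * I.card := by exact_mod_cast hcard
  have hIcard' : (I.card : ℤ) = A.card + B.card + C.card := by exact_mod_cast hIcard
  have hp1 : (0 : ℤ) ≤ ((VA.card : ℤ) - 2) * ((VB.card : ℤ) - 2) :=
    mul_nonneg (by linarith) (by linarith)
  have hp2 : (0 : ℤ) ≤ ((VA.card : ℤ) - 2) * ((VC.card : ℤ) - 2) :=
    mul_nonneg (by linarith) (by linarith)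
  have hp3 : (0 : ℤ) ≤ ((VB.card : ℤ) - 2) * ((VC.card : ℤ) - 2) :=
    mul_nonneg (by linarith) (by linarith)
  have hq : (0 : ℤ) ≤ ((n : ℤ) - 1 - ((VA.card : ℤ) + VB.card + VC.card - 4)) *
      ((n : ℤ) - 1 + ((VA.card : ℤ) + VB.card + VC.card - 4)) :=
    mul_nonneg (by linarith) (by linarith)
  nlinarith [hp1, hp2, hp3, hq, h4A', h4B', h4C', hcard', hIcard', hn']
end

section
/- Let n ≥ 3 and let I be a finite set of diagonals of the convex (n+3)-gon G_{n+3} such that the non-crossing graph G(I) has exactly two connected components I₁ and I₂, and |I| ≥ q(n)+1. Then |I₁| = 1 or |I₂| = 1. -/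
set_option maxHeartbeats 1000000


/-- `q(n) = n(n+2)/4` for even `n` and `q(n) = (n+1)²/4` for odd `n`. -/
def q (n : ℕ) : ℕ := if Even n then n * (n + 2) / 4 else (n + 1) ^ 2 / 4

lemma crosses_ne {a b : ℕ × ℕ} (h : Crosses a b) :
    a.1 ≠ b.1 ∧ a.1 ≠ b.2 ∧ a.2 ≠ b.1 ∧ a.2 ≠ b.2 := by
  unfold Crosses at h; omega

lemma le_helper (a b c : ℕ) (h : 4*a + 4*b ≤ 4*c + 3) : a + b ≤ c := by omega

lemma sum_three (x y : ℕ) (h : 2 ≤ x * y) : 3 ≤ x + y := by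
  by_contra hlt
  push_neg at hlt
  have hx : x ≤ 2 := by omega
  have hy : y ≤ 2 := by omega
  interval_cases x <;> interval_cases y <;> omega

lemma grid_bound (a₀ : ℕ × ℕ) (S : Finset (ℕ × ℕ))
    (hd : ∀ b ∈ S, b.1 < b.2)
    (hc : ∀ b ∈ S, Crosses a₀ b) :
    ∃ V₁ V₂ : Finset ℕ, Disjoint V₁ V₂ ∧ S.card ≤ V₁.card * V₂.card ∧
      ∀ v ∈ V₁ ∪ V₂, ∃ b ∈ S, v = b.1 ∨ v = b.2 := by
  classical
  set F : ℕ × ℕ → ℕ := fun b => if a₀.1 < b.1 ∧ b.1 < a₀.2 then b.1 else b.2 with hF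
  set G : ℕ × ℕ → ℕ := fun b => if a₀.1 < b.1 ∧ b.1 < a₀.2 then b.2 else b.1 with hG
  have key : ∀ b ∈ S, (a₀.1 < F b ∧ F b < a₀.2) ∧ (G b < a₀.1 ∨ a₀.2 < G b)
      ∧ (F b = b.1 ∨ F b = b.2) ∧ (G b = b.1 ∨ G b = b.2) := by
    intro b hb
    have h := hc b hb
    unfold Crosses at h
    simp only [hF, hG]
    split_ifs with hcond
    · exact ⟨hcond, by omega, Or.inl rfl, Or.inr rfl⟩
    · exact ⟨by omega, by omega, Or.inr rfl, Or.inl rfl⟩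
  refine ⟨S.image F, S.image G, ?_, ?_, ?_⟩
  · rw [Finset.disjoint_left]
    intro v hv hv'
    obtain ⟨b, hb, rfl⟩ := Finset.mem_image.mp hv
    obtain ⟨b', hb', he⟩ := Finset.mem_image.mp hv'
    have h1 := (key b hb).1
    have h2 := (key b' hb').2.1
    omega
  · have hinj : Set.InjOn (fun b => (F b, G b)) S := by
      intro b hb b' hb' he
      obtain ⟨⟨k11, k12⟩, k13, k14, k15⟩ := key b hb
      obtain ⟨⟨k21, k22⟩, k23, k24, k25⟩ := key b' hb'
      have hb2 := hd b hb
      have hb2' := hd b' hb'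
      simp only [Prod.mk.injEq] at he
      obtain ⟨he1, he2⟩ := he
      have : b.1 = b'.1 ∧ b.2 = b'.2 := by omega
      exact Prod.ext this.1 this.2
    calc S.card = (S.image (fun b => (F b, G b))).card :=
          (Finset.card_image_of_injOn hinj).symm
      _ ≤ ((S.image F) ×ˢ (S.image G)).card := by
          apply Finset.card_le_card
          intro x hx
          obtain ⟨b, hb, rfl⟩ := Finset.mem_image.mp hx
          exact Finset.mem_product.mpr
            ⟨Finset.mem_image_of_mem _ hb, Finset.mem_image_of_mem _ hb⟩
      _ = _ := Finset.card_product _ _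
  · intro v hv
    rcases Finset.mem_union.mp hv with hv | hv
    · obtain ⟨b, hb, rfl⟩ := Finset.mem_image.mp hv
      exact ⟨b, hb, (key b hb).2.2.1⟩
    · obtain ⟨b, hb, rfl⟩ := Finset.mem_image.mp hv
      exact ⟨b, hb, (key b hb).2.2.2⟩

/-- Lemma 2.22: if `G(I)` has exactly two connected components `I₁`, `I₂` and
`|I| ≥ q(n)+1`, then one of the components is a singleton. -/
theorem singleton_component (n : ℕ) (hn : 3 ≤ n) (I I₁ I₂ : Finset (ℕ × ℕ))
    (hdiag : ∀ d ∈ I, IsDiag (n + 3) d) (h2 : TwoComponents I I₁ I₂)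
    (hI : q n + 1 ≤ I.card) :
    I₁.card = 1 ∨ I₂.card = 1 := by
  by_contra hcon
  push_neg at hcon
  obtain ⟨hcon1, hcon2⟩ := hcon
  obtain ⟨hunion, hdisj, hne1, hne2, hreach⟩ := h2
  have hsub1 : I₁ ⊆ I := by rw [← hunion]; exact Finset.subset_union_left
  have hsub2 : I₂ ⊆ I := by rw [← hunion]; exact Finset.subset_union_right
  have hc1 : 2 ≤ I₁.card := by
    have := Finset.card_pos.mpr hne1; omega
  have hc2 : 2 ≤ I₂.card := by
    have := Finset.card_pos.mpr hne2; omega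
  have hcross : ∀ a ∈ I₁, ∀ b ∈ I₂, Crosses a b := by
    intro a ha b hb
    by_contra hnc
    have hne : a ≠ b := by
      intro h; exact Finset.disjoint_left.mp hdisj ha (h ▸ hb)
    have hr : (ncGraph I).Reachable ⟨a, hsub1 ha⟩ ⟨b, hsub2 hb⟩ :=
      SimpleGraph.Adj.reachable ⟨fun h => hne (congrArg Subtype.val h), hnc⟩
    rw [hreach a (hsub1 ha) b (hsub2 hb)] at hr
    rcases hr with ⟨-, h1⟩ | ⟨h1, -⟩
    · exact Finset.disjoint_left.mp hdisj h1 hb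
    · exact Finset.disjoint_left.mp hdisj ha h1
  obtain ⟨a₀, ha₀⟩ := hne1
  obtain ⟨b₀, hb₀⟩ := hne2
  have hdI : ∀ b ∈ I, b.1 < b.2 := by
    intro b hb; have := hdiag b hb; unfold IsDiag at this; omega
  obtain ⟨V₁, V₂, hVdisj, hVcard, hVmem⟩ :=
    grid_bound a₀ I₂ (fun b hb => hdI b (hsub2 hb)) (fun b hb => hcross a₀ ha₀ b hb)
  obtain ⟨W₁, W₂, hWdisj, hWcard, hWmem⟩ :=
    grid_bound b₀ I₁ (fun a ha => hdI a (hsub1 ha))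
      (fun a ha => Or.symm (hcross a ha b₀ hb₀))
  have hVW : Disjoint (V₁ ∪ V₂) (W₁ ∪ W₂) := by
    rw [Finset.disjoint_left]
    intro v hv hw
    obtain ⟨b, hb, hbv⟩ := hVmem v hv
    obtain ⟨a, ha, hav⟩ := hWmem v hw
    have := crosses_ne (hcross a ha b hb)
    omega
  have hsubIcc : (V₁ ∪ V₂) ∪ (W₁ ∪ W₂) ⊆ Finset.Icc 1 (n + 3) := by
    intro v hv
    simp only [Finset.mem_Icc]
    rcases Finset.mem_union.mp hv with h | h
    · obtain ⟨b, hb, hbv⟩ := hVmem v h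
      have := hdiag b (hsub2 hb); unfold IsDiag at this; omega
    · obtain ⟨a, ha, hav⟩ := hWmem v h
      have := hdiag a (hsub1 ha); unfold IsDiag at this; omega
  have hsum : V₁.card + V₂.card + (W₁.card + W₂.card) ≤ n + 3 := by
    have h1 := Finset.card_le_card hsubIcc
    rw [Finset.card_union_of_disjoint hVW, Finset.card_union_of_disjoint hVdisj,
        Finset.card_union_of_disjoint hWdisj, Nat.card_Icc] at h1
    omega
  set v₁ := V₁.card
  set v₂ := V₂.card
  set w₁ := W₁.card
  set w₂ := W₂.card
  have hv : 2 ≤ v₁ * v₂ := le_trans hc2 hVcard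
  have hw : 2 ≤ w₁ * w₂ := le_trans hc1 hWcard
  have hs3 : 3 ≤ v₁ + v₂ := sum_three _ _ hv
  have ht3 : 3 ≤ w₁ + w₂ := sum_three _ _ hw
  have hmain : v₁ * v₂ + w₁ * w₂ ≤ q n := by
    obtain ⟨s', hs'⟩ : ∃ s', v₁ + v₂ = s' + 3 := ⟨v₁ + v₂ - 3, by omega⟩
    obtain ⟨t', ht'⟩ : ∃ t', w₁ + w₂ = t' + 3 := ⟨w₁ + w₂ - 3, by omega⟩
    have h4v : 4 * (v₁ * v₂) ≤ (v₁ + v₂) * (v₁ + v₂) := by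
      nlinarith [two_mul_le_add_sq v₁ v₂]
    have h4w : 4 * (w₁ * w₂) ≤ (w₁ + w₂) * (w₁ + w₂) := by
      nlinarith [two_mul_le_add_sq w₁ w₂]
    have hst : s' + t' + 4 ≤ n + 1 := by omega
    have hsq : (v₁ + v₂) * (v₁ + v₂) + (w₁ + w₂) * (w₁ + w₂) ≤
        (s' + t' + 4) * (s' + t' + 4) + 2 := by
      rw [hs', ht']; nlinarith [Nat.zero_le (s' * t')]
    have hpow : (s' + t' + 4) * (s' + t' + 4) ≤ (n + 1) * (n + 1) :=
      Nat.mul_le_mul hst hst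
    have hkey : 4 * (v₁ * v₂) + 4 * (w₁ * w₂) ≤ (n + 1) * (n + 1) + 2 := by
      linarith
    rcases Nat.even_or_odd n with he | ho
    · obtain ⟨m, rfl⟩ := he
      have hq : q (m + m) = m * m + m := by
        unfold q
        rw [if_pos ⟨m, rfl⟩]
        have h4 : (m + m) * (m + m + 2) = 4 * (m * m + m) := by ring
        rw [h4, Nat.mul_div_cancel_left _ (by norm_num : 0 < 4)]
      rw [hq]
      have heq : (m + m + 1) * (m + m + 1) + 2 ≤ 4 * (m * m + m) + 3 :=
        le_of_eq (by ring)
      exact le_helper _ _ _ (by linarith)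
    · obtain ⟨m, rfl⟩ := ho
      have hq : q (2 * m + 1) = (m + 1) * (m + 1) := by
        unfold q
        rw [if_neg (by simp [Nat.even_add_one, parity_simps])]
        have h4 : (2 * m + 1 + 1) ^ 2 = 4 * ((m + 1) * (m + 1)) := by ring
        rw [h4, Nat.mul_div_cancel_left _ (by norm_num : 0 < 4)]
      rw [hq]
      have heq : (2 * m + 1 + 1) * (2 * m + 1 + 1) + 2 ≤ 4 * ((m + 1) * (m + 1)) + 3 := by
        nlinarith
      exact le_helper _ _ _ (by linarith)
  have hcardI : I.card = I₁.card + I₂.card := by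
    rw [← hunion, Finset.card_union_of_disjoint hdisj]
  linarith [hI, hVcard, hWcard, hmain, hcardI.le, hcardI.ge]
end

section
/- Let n ≥ 3 and let I be a finite set of diagonals of the convex (n+3)-gon G_{n+3} such that the non-crossing graph G(I) has exactly two connected components and |I| = q(n)+1. Then there is a maximal diagonal d of G_{n+3} such that I = {d} ∪ {e : e is a diagonal of G_{n+3} crossing d}; moreover {d} is one connected component of G(I) and the set of diagonals crossing d is the other. -/
/-- The length of a diagonal of the convex `N`-gon: the smaller of the two numbers of
vertices lying strictly on either side of it. -/
def DiagLen (N : ℕ) (d : ℕ × ℕ) : ℕ :=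
  min (d.2 - d.1 - 1) (N - 1 - (d.2 - d.1))

lemma sq4_even (k : ℕ) : (2*k)^2/4 = k^2 := by
  rw [show (2*k)^2 = k^2*4 by ring, Nat.mul_div_cancel _ (by norm_num)]

lemma sq4_odd (k : ℕ) : (2*k+1)^2/4 = k^2 + k := by
  rw [show (2*k+1)^2 = (k^2+k)*4+1 by ring]
  omega

lemma prod_le_sq_div4 (p q : ℕ) : p*q ≤ (p+q)^2/4 := by
  rw [Nat.le_div_iff_mul_le (by norm_num)]
  rcases le_total p q with h | h
  · obtain ⟨e, rfl⟩ := Nat.exists_eq_add_of_le h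
    nlinarith [Nat.zero_le (p*e)]
  · obtain ⟨e, rfl⟩ := Nat.exists_eq_add_of_le h
    nlinarith [Nat.zero_le (q*e)]

lemma arith4 (s t : ℕ) (hs : 3 ≤ s) (ht : 3 ≤ t) :
    s^2/4 + t^2/4 ≤ (s+t-2)^2/4 := by
  rcases Nat.even_or_odd s with ⟨a, ha⟩ | ⟨a, ha⟩ <;>
    rcases Nat.even_or_odd t with ⟨b, hb⟩ | ⟨b, hb⟩
  · obtain ⟨a', rfl⟩ : ∃ a', a = a' + 2 := ⟨a - 2, by omega⟩
    obtain ⟨b', rfl⟩ : ∃ b', b = b' + 2 := ⟨b - 2, by omega⟩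
    subst ha hb
    rw [show (a'+2)+(a'+2) = 2*(a'+2) by ring, show (b'+2)+(b'+2) = 2*(b'+2) by ring,
      sq4_even, sq4_even, show 2*(a'+2)+2*(b'+2)-2 = 2*(a'+b'+3) by omega, sq4_even]
    nlinarith [Nat.zero_le (a'*b')]
  · obtain ⟨a', rfl⟩ : ∃ a', a = a' + 2 := ⟨a - 2, by omega⟩
    obtain ⟨b', rfl⟩ : ∃ b', b = b' + 1 := ⟨b - 1, by omega⟩
    subst ha hb
    rw [show (a'+2)+(a'+2) = 2*(a'+2) by ring, sq4_even, show 2*(b'+1)+1 = 2*(b'+1)+1 by ring,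
      sq4_odd, show 2*(a'+2)+(2*(b'+1)+1)-2 = 2*(a'+b'+2)+1 by omega, sq4_odd]
    nlinarith [Nat.zero_le (a'*b')]
  · obtain ⟨a', rfl⟩ : ∃ a', a = a' + 1 := ⟨a - 1, by omega⟩
    obtain ⟨b', rfl⟩ : ∃ b', b = b' + 2 := ⟨b - 2, by omega⟩
    subst ha hb
    rw [show (b'+2)+(b'+2) = 2*(b'+2) by ring, sq4_even, sq4_odd,
      show 2*(a'+1)+1+2*(b'+2)-2 = 2*(a'+b'+2)+1 by omega, sq4_odd]
    nlinarith [Nat.zero_le (a'*b')]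
  · obtain ⟨a', rfl⟩ : ∃ a', a = a' + 1 := ⟨a - 1, by omega⟩
    obtain ⟨b', rfl⟩ : ∃ b', b = b' + 1 := ⟨b - 1, by omega⟩
    subst ha hb
    rw [sq4_odd, sq4_odd, show 2*(a'+1)+1+(2*(b'+1)+1)-2 = 2*(a'+b'+2) by omega, sq4_even]
    nlinarith [Nat.zero_le (a'*b')]

lemma min_eq_of_prod (a b s : ℕ) (h : a + b = s) (h2 : a * b = s^2/4) (h1 : 1 ≤ a) :
    min a b = s/2 := by
  rcases Nat.even_or_odd s with ⟨c, hc⟩ | ⟨c, hc⟩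
  · have hc2 : s = 2*c := by omega
    subst hc2
    rw [sq4_even] at h2
    have hz : ((a:ℤ) - c)^2 = 0 := by
      have hb : (b:ℤ) = 2*c - a := by push_cast [← h]; ring_nf; omega
      have h2' : (a:ℤ) * b = c^2 := by exact_mod_cast h2
      rw [hb] at h2'; linear_combination -h2'
    have h3 : (a:ℤ) - c = 0 := by
      have := pow_eq_zero_iff (n := 2) (by norm_num) |>.mp hz
      exact this
    omega
  · have hc2 : s = 2*c+1 := by omega
    subst hc2
    rw [sq4_odd] at h2
    have hz : ((a:ℤ) - c) * ((a:ℤ) - (c+1)) = 0 := by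
      have hb : (b:ℤ) = 2*c + 1 - a := by push_cast [← h]; ring_nf; omega
      have h2' : (a:ℤ) * b = c^2 + c := by exact_mod_cast h2
      rw [hb] at h2'; linear_combination -h2'
    rcases mul_eq_zero.mp hz with hz | hz <;> omega



def rotN (N t w : ℕ) : ℕ := if w + t ≤ N then w + t else w + t - N

def rotP (N t : ℕ) (p : ℕ × ℕ) : ℕ × ℕ :=
  if rotN N t p.1 < rotN N t p.2 then (rotN N t p.1, rotN N t p.2)
  else (rotN N t p.2, rotN N t p.1)

lemma crosses_mk (a b c d : ℕ) :
    Crosses (a, b) (c, d) ↔ ((a < c ∧ c < b ∧ b < d) ∨ (c < a ∧ a < d ∧ d < b)) := Iff.rfl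

lemma rotP_mk (N t a b : ℕ) :
    rotP N t (a, b) = if rotN N t a < rotN N t b then (rotN N t a, rotN N t b)
      else (rotN N t b, rotN N t a) := rfl

lemma rotP_valid (N t : ℕ) (ht : t ≤ N) (p : ℕ × ℕ)
    (hp : 1 ≤ p.1 ∧ p.1 < p.2 ∧ p.2 ≤ N) :
    1 ≤ (rotP N t p).1 ∧ (rotP N t p).1 < (rotP N t p).2 ∧ (rotP N t p).2 ≤ N := by
  obtain ⟨a, b⟩ := p
  simp only at hp
  rw [rotP_mk]
  unfold rotN
  split_ifs <;> simp only [Prod.fst, Prod.snd] <;> omega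

lemma rotP_inj (N t : ℕ) (ht : t ≤ N) (p q : ℕ × ℕ)
    (hp : 1 ≤ p.1 ∧ p.1 < p.2 ∧ p.2 ≤ N) (hq : 1 ≤ q.1 ∧ q.1 < q.2 ∧ q.2 ≤ N)
    (h : rotP N t p = rotP N t q) : p = q := by
  obtain ⟨a, b⟩ := p
  obtain ⟨c, d⟩ := q
  simp only at hp hq
  rw [rotP_mk, rotP_mk] at h
  unfold rotN at h
  rw [Prod.mk.injEq]
  split_ifs at h <;> rw [Prod.mk.injEq] at h <;> omega

lemma crosses_rotP (N t : ℕ) (ht : t ≤ N) (p q : ℕ × ℕ)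
    (hp : 1 ≤ p.1 ∧ p.1 < p.2 ∧ p.2 ≤ N) (hq : 1 ≤ q.1 ∧ q.1 < q.2 ∧ q.2 ≤ N) :
    Crosses (rotP N t p) (rotP N t q) ↔ Crosses p q := by
  obtain ⟨a, b⟩ := p
  obtain ⟨c, d⟩ := q
  simp only at hp hq
  rw [rotP_mk, rotP_mk, crosses_mk]
  unfold rotN
  split_ifs <;> simp only [Prod.fst, Prod.snd, crosses_mk] <;> omega
set_option maxHeartbeats 1000000 in
lemma crosses_symm {d e : ℕ × ℕ} (h : Crosses d e) : Crosses e d := Or.symm h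

set_option maxHeartbeats 1000000 in
lemma crux (N : ℕ) (X Y : Finset (ℕ × ℕ))
    (hX : ∀ p ∈ X, 1 ≤ p.1 ∧ p.1 < p.2 ∧ p.2 ≤ N)
    (hY : ∀ p ∈ Y, 1 ≤ p.1 ∧ p.1 < p.2 ∧ p.2 ≤ N)
    (hcr : ∀ p ∈ X, ∀ y ∈ Y, Crosses p y)
    (hconn : ∀ P : ℕ × ℕ → Prop,
      (∀ y ∈ Y, ∀ y' ∈ Y, ¬ Crosses y y' → P y → P y') →
      ∀ y ∈ Y, ∀ y' ∈ Y, P y → P y')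
    (hX2 : 2 ≤ X.card) (hY2 : 2 ≤ Y.card) :
    X.card + Y.card ≤ (N - 2)^2 / 4 := by
  obtain ⟨x₀, hx₀⟩ := Finset.card_pos.mp (by omega : 0 < X.card)
  obtain ⟨y₀, hy₀⟩ := Finset.card_pos.mp (by omega : 0 < Y.card)
  have hx₀v := hX x₀ hx₀
  set t := N - x₀.1 with htdef
  have ht : t ≤ N := by omega
  set m := x₀.2 - x₀.1 with hmdef
  set σ : ℕ × ℕ → ℕ × ℕ := rotP N t with hσ
  have hσx₀ : σ x₀ = (m, N) := by
    obtain ⟨a, b⟩ := x₀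
    simp only at hx₀v
    rw [hσ, rotP_mk]
    unfold rotN
    split_ifs <;> rw [Prod.mk.injEq] <;> omega
  -- basic facts about images of Y
  have hYv : ∀ y ∈ Y, 1 ≤ (σ y).1 ∧ (σ y).1 < (σ y).2 ∧ (σ y).2 ≤ N :=
    fun y hy => rotP_valid N t ht y (hY y hy)
  have hXv : ∀ p ∈ X, 1 ≤ (σ p).1 ∧ (σ p).1 < (σ p).2 ∧ (σ p).2 ≤ N :=
    fun p hp => rotP_valid N t ht p (hX p hp)
  have hcr' : ∀ p ∈ X, ∀ y ∈ Y, Crosses (σ p) (σ y) :=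
    fun p hp y hy => (crosses_rotP N t ht p y (hX p hp) (hY y hy)).mpr (hcr p hp y hy)
  have hsplit : ∀ y ∈ Y, (σ y).1 < m ∧ m < (σ y).2 ∧ (σ y).2 < N := by
    intro y hy
    have h1 := hcr' x₀ hx₀ y hy
    rw [hσx₀] at h1
    have h2 := hYv y hy
    rcases h1 with ⟨h, h', h''⟩ | ⟨h, h', h''⟩ <;> simp only [Prod.fst, Prod.snd] at * <;> omega
  -- extremes of endpoints
  have hYne : (Y.image (fun y => (σ y).1)).Nonempty := ⟨(σ y₀).1, Finset.mem_image_of_mem _ hy₀⟩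
  have hYne2 : (Y.image (fun y => (σ y).2)).Nonempty := ⟨(σ y₀).2, Finset.mem_image_of_mem _ hy₀⟩
  set amin := (Y.image (fun y => (σ y).1)).min' hYne with hamin
  set amax := (Y.image (fun y => (σ y).1)).max' hYne with hamax
  set bmin := (Y.image (fun y => (σ y).2)).min' hYne2 with hbmin
  set bmax := (Y.image (fun y => (σ y).2)).max' hYne2 with hbmax
  have hAle : ∀ y ∈ Y, amin ≤ (σ y).1 ∧ (σ y).1 ≤ amax := by
    intro y hy
    constructor
    · apply Finset.min'_le
      exact Finset.mem_image_of_mem _ hy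
    · apply Finset.le_max'
      exact Finset.mem_image_of_mem _ hy
  have hBle : ∀ y ∈ Y, bmin ≤ (σ y).2 ∧ (σ y).2 ≤ bmax := by
    intro y hy
    constructor
    · apply Finset.min'_le
      exact Finset.mem_image_of_mem _ hy
    · apply Finset.le_max'
      exact Finset.mem_image_of_mem _ hy
  obtain ⟨ya, hya, hyamin⟩ : ∃ y ∈ Y, (σ y).1 = amin := by
    have := Finset.min'_mem _ hYne; rw [← hamin] at this
    simpa using (Finset.mem_image.mp this)
  obtain ⟨yb, hyb, hybmax⟩ : ∃ y ∈ Y, (σ y).1 = amax := by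
    have := Finset.max'_mem _ hYne; rw [← hamax] at this
    simpa using (Finset.mem_image.mp this)
  obtain ⟨yc, hyc, hycmin⟩ : ∃ y ∈ Y, (σ y).2 = bmin := by
    have := Finset.min'_mem _ hYne2; rw [← hbmin] at this
    simpa using (Finset.mem_image.mp this)
  obtain ⟨yd, hyd, hydmax⟩ : ∃ y ∈ Y, (σ y).2 = bmax := by
    have := Finset.max'_mem _ hYne2; rw [← hbmax] at this
    simpa using (Finset.mem_image.mp this)
  have horder : 1 ≤ amin ∧ amin ≤ amax ∧ amax < m ∧ m < bmin ∧ bmin ≤ bmax ∧ bmax < N := by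
    refine ⟨?_, ?_, ?_, ?_, ?_, ?_⟩
    · exact le_trans (hYv ya hya).1 (le_of_eq hyamin)
    · exact hyamin ▸ (hAle ya hya).2
    · exact hybmax ▸ (hsplit yb hyb).1
    · exact hycmin ▸ (hsplit yc hyc).2.1
    · exact hycmin ▸ (hBle yc hyc).2
    · exact hydmax ▸ (hsplit yd hyd).2.2
  -- the dichotomy for each x ∈ X
  have hdich : ∀ x ∈ X, ((σ x).1 < amin ∧ amax < (σ x).2 ∧ (σ x).2 < bmin) ∨
      (amax < (σ x).1 ∧ (σ x).1 < bmin ∧ bmax < (σ x).2) := by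
    intro x hx
    have hxv := hXv x hx
    set u := (σ x).1 with hu
    set v := (σ x).2 with hv
    have hcru : ∀ y ∈ Y, (u < (σ y).1 ∧ (σ y).1 < v ∧ v < (σ y).2) ∨
        ((σ y).1 < u ∧ u < (σ y).2 ∧ (σ y).2 < v) := by
      intro y hy
      have h1 := hcr' x hx y hy
      have hyv := hYv y hy
      have hne1 : (σ y).1 ≠ u := by
        intro he
        rcases h1 with ⟨h, h', h''⟩ | ⟨h, h', h''⟩ <;> omega
      rcases h1 with ⟨h, h', h''⟩ | ⟨h, h', h''⟩
      · exact Or.inl ⟨h, h', h''⟩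
      · exact Or.inr ⟨h, h', h''⟩
    -- invariant predicate
    have hstep : ∀ y ∈ Y, ∀ y' ∈ Y, ¬ Crosses y y' → u < (σ y).1 → u < (σ y').1 := by
      intro y hy y' hy' hnc hPy
      by_contra hPy'
      rcases hcru y hy with ⟨h, h', h''⟩ | ⟨h, h', h''⟩; swap
      · omega
      rcases hcru y' hy' with ⟨g, g', g''⟩ | ⟨g, g', g''⟩
      · omega
      have hcyy : Crosses (σ y') (σ y) := by
        refine Or.inl ?_
        refine ⟨by omega, ?_, by omega⟩
        have := (hsplit y hy).1
        have := (hsplit y' hy').2.1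
        omega
      exact hnc (crosses_symm ((crosses_rotP N t ht y' y (hY y' hy') (hY y hy)).mp hcyy))
    by_cases hP : u < (σ y₀).1
    · left
      have hall : ∀ y ∈ Y, u < (σ y).1 :=
        fun y hy => hconn (fun y => u < (σ y).1) hstep y₀ hy₀ y hy hP
      have hL : ∀ y ∈ Y, u < (σ y).1 ∧ (σ y).1 < v ∧ v < (σ y).2 := by
        intro y hy
        rcases hcru y hy with h | h
        · exact h
        · have := hall y hy; omega
      refine ⟨hyamin ▸ (hL ya hya).1, hybmax ▸ (hL yb hyb).2.1, hycmin ▸ (hL yc hyc).2.2⟩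
    · right
      have hall : ∀ y ∈ Y, ¬ u < (σ y).1 := by
        intro y hy hu'
        exact hP (hconn (fun y => u < (σ y).1) hstep y hy y₀ hy₀ hu')
      have hR : ∀ y ∈ Y, (σ y).1 < u ∧ u < (σ y).2 ∧ (σ y).2 < v := by
        intro y hy
        rcases hcru y hy with h | h
        · exact absurd h.1 (hall y hy)
        · exact h
      refine ⟨hybmax ▸ (hR yb hyb).1, hycmin ▸ (hR yc hyc).2.1, hydmax ▸ (hR yd hyd).2.2⟩
  -- counting
  have hXim : X.image σ ⊆ (Finset.Ico 1 amin ×ˢ Finset.Ioo amax bmin) ∪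
      (Finset.Ioo amax bmin ×ˢ Finset.Ioc bmax N) := by
    intro p hp
    obtain ⟨x, hx, rfl⟩ := Finset.mem_image.mp hp
    have hxv := hXv x hx
    rcases hdich x hx with ⟨h1, h2, h3⟩ | ⟨h1, h2, h3⟩
    · apply Finset.mem_union_left
      rw [Finset.mem_product]
      exact ⟨Finset.mem_Ico.mpr ⟨hxv.1, h1⟩, Finset.mem_Ioo.mpr ⟨h2, h3⟩⟩
    · apply Finset.mem_union_right
      rw [Finset.mem_product]
      exact ⟨Finset.mem_Ioo.mpr ⟨h1, h2⟩, Finset.mem_Ioc.mpr ⟨h3, hxv.2.2⟩⟩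
  have hYim : Y.image σ ⊆ Finset.Icc amin amax ×ˢ Finset.Icc bmin bmax := by
    intro p hp
    obtain ⟨y, hy, rfl⟩ := Finset.mem_image.mp hp
    rw [Finset.mem_product]
    exact ⟨Finset.mem_Icc.mpr (hAle y hy), Finset.mem_Icc.mpr (hBle y hy)⟩
  have hXcard : X.card = (X.image σ).card :=
    (Finset.card_image_of_injOn (fun p hp q hq h => rotP_inj N t ht p q (hX p hp) (hX q hq) h)).symm
  have hYcard : Y.card = (Y.image σ).card :=
    (Finset.card_image_of_injOn (fun p hp q hq h => rotP_inj N t ht p q (hY p hp) (hY q hq) h)).symm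
  have hXle : X.card ≤ (amin - 1) * (bmin - amax - 1) + (bmin - amax - 1) * (N - bmax) := by
    rw [hXcard]
    calc (X.image σ).card ≤ _ := Finset.card_le_card hXim
    _ ≤ _ := Finset.card_union_le _ _
    _ = _ := by
      simp [Finset.card_product, Nat.card_Ico, Nat.card_Ioo, Nat.card_Ioc]
  have hYle : Y.card ≤ (amax + 1 - amin) * (bmax + 1 - bmin) := by
    rw [hYcard]
    calc (Y.image σ).card ≤ _ := Finset.card_le_card hYim
    _ = _ := by simp [Finset.card_product, Nat.card_Icc]
  -- final arithmetic
  set c1 := bmin - amax - 1 with hc1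
  set c2 := (amin - 1) + (N - bmax) with hc2
  set b1 := amax + 1 - amin with hb1
  set b2 := bmax + 1 - bmin with hb2
  have hXle' : X.card ≤ c1 * c2 := by
    calc X.card ≤ _ := hXle
    _ = c1 * c2 := by rw [hc1, hc2]; ring
  have hsum : c1 + c2 + (b1 + b2) = N := by omega
  have hc1pos : 1 ≤ c1 := by omega
  have hc2pos : 1 ≤ c2 := by omega
  have hb1pos : 1 ≤ b1 := by omega
  have hb2pos : 1 ≤ b2 := by omega
  have hs3 : 3 ≤ c1 + c2 := by
    by_contra h
    have h1 : c1 = 1 ∧ c2 = 1 := by omega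
    rw [h1.1, h1.2] at hXle'
    omega
  have ht3 : 3 ≤ b1 + b2 := by
    by_contra h
    have h1 : b1 = 1 ∧ b2 = 1 := by omega
    rw [h1.1, h1.2] at hYle
    omega
  calc X.card + Y.card ≤ c1 * c2 + b1 * b2 := by omega
  _ ≤ (c1 + c2)^2/4 + (b1 + b2)^2/4 := by
      exact Nat.add_le_add (prod_le_sq_div4 c1 c2) (prod_le_sq_div4 b1 b2)
  _ ≤ ((c1 + c2) + (b1 + b2) - 2)^2/4 := arith4 _ _ hs3 ht3
  _ = (N - 2)^2/4 := by rw [hsum]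

lemma mem_diags {N : ℕ} {e : ℕ × ℕ} : e ∈ Diags N ↔ IsDiag N e := by
  unfold Diags
  rw [Finset.mem_filter, Finset.mem_product, Finset.mem_range, Finset.mem_range]
  unfold IsDiag
  omega

lemma q_eq (n : ℕ) : q n = (n+1)^2/4 := by
  unfold q
  split_ifs with h
  · obtain ⟨k, rfl⟩ := h
    rw [show (k+k)*(k+k+2) = (k*(k+1))*4 by ring, Nat.mul_div_cancel _ (by norm_num),
      show (k+k+1)^2 = (k*(k+1))*4+1 by ring]
    omega
  · rfl

lemma crossSet_eq (N i j : ℕ) (hd : IsDiag N (i, j)) :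
    (Diags N).filter (fun e => Crosses (i, j) e) =
      (Finset.Ioo i j ×ˢ Finset.Ioc j N) ∪ (Finset.Ioo 0 i ×ˢ Finset.Ioo i j) := by
  obtain ⟨h1, h2, h3, h4⟩ := hd
  simp only at h1 h2 h3 h4
  ext ⟨k, l⟩
  rw [Finset.mem_filter, mem_diags, Finset.mem_union, Finset.mem_product, Finset.mem_product,
    Finset.mem_Ioo, Finset.mem_Ioo, Finset.mem_Ioo, Finset.mem_Ioc]
  unfold IsDiag Crosses
  simp only [Prod.fst, Prod.snd]
  omega

lemma crossSet_card (N i j : ℕ) (hd : IsDiag N (i, j)) :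
    ((Diags N).filter (fun e => Crosses (i, j) e)).card = (j - i - 1) * (N - 1 - (j - i)) := by
  obtain ⟨h1, h2, h3, h4⟩ := hd
  simp only at h1 h2 h3 h4
  rw [crossSet_eq N i j ⟨h1, h2, h3, h4⟩, Finset.card_union_of_disjoint]
  · simp only [Finset.card_product, Nat.card_Ioo, Nat.card_Ioc]
    simp only [Nat.sub_zero]
    rw [show (j-i-1)*(N-j) + (i-1)*(j-i-1) = (j-i-1)*((N-j)+(i-1)) by ring]
    congr 1
    omega
  · rw [Finset.disjoint_left]
    rintro ⟨k, l⟩ hk hl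
    rw [Finset.mem_product, Finset.mem_Ioo, Finset.mem_Ioc] at hk
    rw [Finset.mem_product, Finset.mem_Ioo, Finset.mem_Ioo] at hl
    omega

lemma tc_swap {I I₁ I₂ : Finset (ℕ × ℕ)} (h : TwoComponents I I₁ I₂) :
    TwoComponents I I₂ I₁ := by
  obtain ⟨h1, h2, h3, h4, h5⟩ := h
  refine ⟨by rw [Finset.union_comm]; exact h1, h2.symm, h4, h3, fun d hd e he => ?_⟩
  rw [h5 d hd e he]
  tauto

lemma cross_of_tc {I I₁ I₂ : Finset (ℕ × ℕ)} (htc : TwoComponents I I₁ I₂) :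
    ∀ p ∈ I₁, ∀ e ∈ I₂, Crosses p e := by
  obtain ⟨hun, hdisj, hne1, hne2, hiff⟩ := htc
  intro p hp e he
  by_contra hnc
  have hpI : p ∈ I := hun ▸ Finset.mem_union_left _ hp
  have heI : e ∈ I := hun ▸ Finset.mem_union_right _ he
  have hne : p ≠ e := fun h => Finset.disjoint_left.mp hdisj hp (h ▸ he)
  have hadj : (ncGraph I).Adj ⟨p, hpI⟩ ⟨e, heI⟩ :=
    ⟨fun h => hne (congrArg Subtype.val h), hnc⟩
  rcases (hiff p hpI e heI).mp hadj.reachable with ⟨h1, h2⟩ | ⟨h1, h2⟩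
  · exact Finset.disjoint_left.mp hdisj h2 he
  · exact Finset.disjoint_left.mp hdisj hp h1

lemma conn_of_tc {I I₁ I₂ : Finset (ℕ × ℕ)} (htc : TwoComponents I I₁ I₂)
    (P : ℕ × ℕ → Prop) (hstep : ∀ y ∈ I₂, ∀ y' ∈ I₂, ¬ Crosses y y' → P y → P y') :
    ∀ y ∈ I₂, ∀ y' ∈ I₂, P y → P y' := by
  obtain ⟨hun, hdisj, hne1, hne2, hiff⟩ := htc
  intro y hy y' hy' hPy
  have hyI : y ∈ I := hun ▸ Finset.mem_union_right _ hy
  have hy'I : y' ∈ I := hun ▸ Finset.mem_union_right _ hy'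
  obtain ⟨w⟩ := (hiff y hyI y' hy'I).mpr (Or.inr ⟨hy, hy'⟩)
  have main : ∀ (a b : {x // x ∈ I}) (_ : (ncGraph I).Walk a b),
      a.1 ∈ I₂ → P a.1 → b.1 ∈ I₂ ∧ P b.1 := by
    intro a b wk
    induction wk with
    | nil => exact fun h1 h2 => ⟨h1, h2⟩
    | @cons u v w' hadj p ih =>
      intro hu hPu
      obtain ⟨hne, hnc⟩ := hadj
      have hv : v.1 ∈ I₂ := by
        rcases Finset.mem_union.mp (hun ▸ v.2 : v.1 ∈ I₁ ∪ I₂) with h | h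
        · exact absurd (crosses_symm (cross_of_tc ⟨hun, hdisj, hne1, hne2, hiff⟩ v.1 h u.1 hu)) hnc
        · exact h
      exact ih hv (hstep u.1 hu v.1 hv hnc hPu)
  exact (main _ _ w hy hPy).2

set_option maxHeartbeats 1000000 in
lemma singleton_case (n : ℕ) (hn : 3 ≤ n) (I I₁ I₂ : Finset (ℕ × ℕ))
    (hdiag : ∀ d ∈ I, IsDiag (n + 3) d)
    (htc : TwoComponents I I₁ I₂)
    (hI : I.card = q n + 1)
    (d : ℕ × ℕ) (hI₁ : I₁ = {d}) :
    ∃ d : ℕ × ℕ, IsDiag (n + 3) d ∧ DiagLen (n + 3) d = (n + 1) / 2 ∧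
      I = insert d ((Diags (n + 3)).filter (fun e => Crosses d e)) ∧
      TwoComponents I {d} ((Diags (n + 3)).filter (fun e => Crosses d e)) := by
  obtain ⟨i, j⟩ := d
  obtain ⟨hun, hdisj, hne1, hne2, hiff⟩ := htc
  have hdI : (i, j) ∈ I := hun ▸ Finset.mem_union_left _ (hI₁ ▸ Finset.mem_singleton_self _)
  have hdd : IsDiag (n + 3) (i, j) := hdiag _ hdI
  have hddc : 1 ≤ i ∧ i + 2 ≤ j ∧ j ≤ n + 3 ∧ ¬(i = 1 ∧ j = n + 3) := hdd
  set S := (Diags (n + 3)).filter (fun e => Crosses (i, j) e) with hS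
  have hcr12 : ∀ e ∈ I₂, Crosses (i, j) e :=
    cross_of_tc ⟨hun, hdisj, hne1, hne2, hiff⟩ (i, j) (hI₁ ▸ Finset.mem_singleton_self _)
  have hsub : I₂ ⊆ S := by
    intro e he
    exact Finset.mem_filter.mpr ⟨mem_diags.mpr (hdiag e (hun ▸ Finset.mem_union_right _ he)),
      hcr12 e he⟩
  have hI2card : I₂.card = q n := by
    have h1 : I₁.card + I₂.card = q n + 1 := by
      rw [← Finset.card_union_of_disjoint hdisj, hun, hI]
    rw [hI₁, Finset.card_singleton] at h1
    omega
  have hScard : S.card = (j - i - 1) * (n + 3 - 1 - (j - i)) := crossSet_card (n + 3) i j hdd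
  have habsum : (j - i - 1) + (n + 3 - 1 - (j - i)) = n + 1 := by omega
  have hab_le : (j - i - 1) * (n + 3 - 1 - (j - i)) ≤ q n := by
    rw [q_eq]
    have := prod_le_sq_div4 (j - i - 1) (n + 3 - 1 - (j - i))
    rwa [habsum] at this
  have hI2S : I₂ = S := by
    apply Finset.eq_of_subset_of_card_le hsub
    rw [hScard, hI2card]
    exact hab_le
  have hab_eq : (j - i - 1) * (n + 3 - 1 - (j - i)) = (n + 1)^2/4 := by
    rw [← hScard, ← hI2S, hI2card, q_eq]
  have hlen : DiagLen (n + 3) (i, j) = (n + 1) / 2 := by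
    unfold DiagLen
    simp only [Prod.fst, Prod.snd]
    exact min_eq_of_prod _ _ _ habsum hab_eq (by omega)
  have hIeq : I = insert (i, j) S := by
    rw [← hun, hI₁, hI2S, Finset.insert_eq]
  have memS : ∀ p : ℕ × ℕ, p ∈ S ↔ IsDiag (n + 3) p ∧ Crosses (i, j) p := by
    intro p
    rw [hS, Finset.mem_filter, mem_diags]
  have memIS : ∀ p ∈ S, p ∈ I := by
    intro p hp
    rw [hIeq]
    exact Finset.mem_insert_of_mem hp
  have hdnotS : (i, j) ∉ S := by
    rw [memS]
    rintro ⟨-, hc | hc⟩ <;> simp only [Prod.fst, Prod.snd] at hc <;> omega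
  -- the forward (isolation) lemma
  have key : ∀ (x y : {z // z ∈ I}) (_ : (ncGraph I).Walk x y), x.1 = (i, j) → y.1 = (i, j) := by
    intro x y wk
    induction wk with
    | nil => exact fun h => h
    | @cons u v w' hadj p ih =>
      intro hx
      obtain ⟨hne, hnc⟩ := hadj
      exfalso
      rcases Finset.mem_insert.mp (hIeq ▸ v.2 : v.1 ∈ insert (i, j) S) with h | h
      · exact hne (Subtype.ext (hx.trans h.symm))
      · exact hnc (hx ▸ ((memS v.1).mp h).2)
  have ncross : ∀ a b c d : ℕ, ¬((a < c ∧ c < b ∧ b < d) ∨ (c < a ∧ a < d ∧ d < b)) →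
      ¬ Crosses (a, b) (c, d) := fun a b c d h => h
  -- small step helper
  have step : ∀ (p q : ℕ × ℕ) (hp : p ∈ I) (hq : q ∈ I), ¬ Crosses p q →
      (ncGraph I).Reachable ⟨p, hp⟩ ⟨q, hq⟩ := by
    intro p q hp hq hnc
    by_cases h : p = q
    · subst h
      rfl
    · exact SimpleGraph.Adj.reachable ⟨fun hh => h (congrArg Subtype.val hh), hnc⟩
  refine ⟨(i, j), hdd, hlen, hIeq, ?_, Finset.disjoint_singleton_left.mpr hdnotS,
    Finset.singleton_nonempty _, (hI2S.trans hS) ▸ hne2, ?_⟩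
  · rw [← Finset.insert_eq, ← hIeq]
  intro e heI f hfI
  constructor
  · intro hreach
    by_cases he : e = (i, j)
    · obtain ⟨w⟩ := hreach
      have hf : f = (i, j) := key _ _ w he
      exact Or.inl ⟨Finset.mem_singleton.mpr he, Finset.mem_singleton.mpr hf⟩
    · by_cases hf : f = (i, j)
      · obtain ⟨w⟩ := hreach.symm
        exact absurd (key _ _ w hf) he
      · refine Or.inr ⟨?_, ?_⟩
        · rcases Finset.mem_insert.mp (hIeq ▸ heI : e ∈ insert (i, j) S) with h | h
          · exact absurd h he
          · exact h
        · rcases Finset.mem_insert.mp (hIeq ▸ hfI : f ∈ insert (i, j) S) with h | h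
          · exact absurd h hf
          · exact h
  · rintro (⟨h1, h2⟩ | ⟨h1, h2⟩)
    · rw [Finset.mem_singleton] at h1 h2
      have : e = f := h1.trans h2.symm
      subst this
      rfl
    · -- both in S : hub paths
      obtain ⟨k, l⟩ := e
      obtain ⟨k', l'⟩ := f
      obtain ⟨hd1, hc1⟩ := (memS _).mp h1
      obtain ⟨hd2, hc2⟩ := (memS _).mp h2
      obtain ⟨he1, he2, he3, he4⟩ := hd1
      obtain ⟨hf1, hf2, hf3, hf4⟩ := hd2
      simp only [Prod.fst, Prod.snd] at he1 he2 he3 he4 hf1 hf2 hf3 hf4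
      have hc1' : (i < k ∧ k < j ∧ j < l) ∨ (k < i ∧ i < l ∧ l < j) := hc1
      have hc2' : (i < k' ∧ k' < j ∧ j < l') ∨ (k' < i ∧ i < l' ∧ l' < j) := hc2
      rcases hc1' with ⟨g1, g2, g3⟩ | ⟨g1, g2, g3⟩ <;>
        rcases hc2' with ⟨g4, g5, g6⟩ | ⟨g4, g5, g6⟩
      · -- both type 1 : mid = (k, l')
        have hmid : (k, l') ∈ S := by
          rw [memS]
          exact ⟨⟨by omega, by omega, by omega, by omega⟩, Or.inl ⟨by omega, by omega, by omega⟩⟩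
        exact (step (k, l) (k, l') heI (memIS _ hmid) (ncross _ _ _ _ (by omega))).trans
          (step (k, l') (k', l') (memIS _ hmid) hfI (ncross _ _ _ _ (by omega)))
      · -- e type 1, f type 2 : mid = (k', i+1)
        have hmid : (k', i + 1) ∈ S := by
          rw [memS]
          exact ⟨⟨by omega, by omega, by omega, by omega⟩, Or.inr ⟨by omega, by omega, by omega⟩⟩
        exact (step (k, l) (k', i + 1) heI (memIS _ hmid) (ncross _ _ _ _ (by omega))).trans
          (step (k', i + 1) (k', l') (memIS _ hmid) hfI (ncross _ _ _ _ (by omega)))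
      · -- e type 2, f type 1 : mid = (k, i+1)
        have hmid : (k, i + 1) ∈ S := by
          rw [memS]
          exact ⟨⟨by omega, by omega, by omega, by omega⟩, Or.inr ⟨by omega, by omega, by omega⟩⟩
        exact (step (k, l) (k, i + 1) heI (memIS _ hmid) (ncross _ _ _ _ (by omega))).trans
          (step (k, i + 1) (k', l') (memIS _ hmid) hfI (ncross _ _ _ _ (by omega)))
      · -- both type 2 : mid = (k, l')
        have hmid : (k, l') ∈ S := by
          rw [memS]
          exact ⟨⟨by omega, by omega, by omega, by omega⟩, Or.inr ⟨by omega, by omega, by omega⟩⟩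
        exact (step (k, l) (k, l') heI (memIS _ hmid) (ncross _ _ _ _ (by omega))).trans
          (step (k, l') (k', l') (memIS _ hmid) hfI (ncross _ _ _ _ (by omega)))


/-- Lemma 2.23: if `G(I)` has exactly two connected components and `|I| = q(n)+1`,
then `I` consists of a maximal diagonal `d` together with all diagonals crossing `d`;
moreover `{d}` is one component and the set of diagonals crossing `d` is the other. -/
theorem structure_of_extremal_sets (n : ℕ) (hn : 3 ≤ n) (I : Finset (ℕ × ℕ))
    (hdiag : ∀ d ∈ I, IsDiag (n + 3) d)
    (h2 : ∃ I₁ I₂ : Finset (ℕ × ℕ), TwoComponents I I₁ I₂)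
    (hI : I.card = q n + 1) :
    ∃ d : ℕ × ℕ, IsDiag (n + 3) d ∧ DiagLen (n + 3) d = (n + 1) / 2 ∧
      I = insert d ((Diags (n + 3)).filter (fun e => Crosses d e)) ∧
      TwoComponents I {d} ((Diags (n + 3)).filter (fun e => Crosses d e)) := by
  obtain ⟨I₁, I₂, htc⟩ := h2
  by_cases h1 : I₁.card = 1
  · obtain ⟨d, hd⟩ := Finset.card_eq_one.mp h1
    exact singleton_case n hn I I₁ I₂ hdiag htc hI d hd
  by_cases h2c : I₂.card = 1
  · obtain ⟨d, hd⟩ := Finset.card_eq_one.mp h2c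
    exact singleton_case n hn I I₂ I₁ hdiag (tc_swap htc) hI d hd
  exfalso
  obtain ⟨hun, hdisj, hne1, hne2, hiff⟩ := htc
  have htc' : TwoComponents I I₁ I₂ := ⟨hun, hdisj, hne1, hne2, hiff⟩
  have hval : ∀ p ∈ I, 1 ≤ p.1 ∧ p.1 < p.2 ∧ p.2 ≤ n + 3 := by
    intro p hp
    obtain ⟨g1, g2, g3, g4⟩ := hdiag p hp
    exact ⟨g1, by omega, g3⟩
  have hX2 : 2 ≤ I₁.card := by
    have := Finset.card_pos.mpr hne1
    omega
  have hY2 : 2 ≤ I₂.card := by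
    have := Finset.card_pos.mpr hne2
    omega
  have hbound := crux (n + 3) I₁ I₂
    (fun p hp => hval p (hun ▸ Finset.mem_union_left _ hp))
    (fun p hp => hval p (hun ▸ Finset.mem_union_right _ hp))
    (cross_of_tc htc')
    (fun P hstep => conn_of_tc htc' P hstep)
    hX2 hY2
  have hcard : I₁.card + I₂.card = q n + 1 := by
    rw [← Finset.card_union_of_disjoint hdisj, hun, hI]
  rw [show n + 3 - 2 = n + 1 by omega, ← q_eq] at hbound
  omega
end
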